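/- Let R be a right or left perfect ring with center C. Then R is centrally essential if and only if Soc(R_C) ⊆ C and every idempotent of R is central. -/

import Mathlib

/-- A ring is *centrally essential* if, as a module over its center, it is an
essential extension of its center. -/
def IsCentrallyEssential (R : Type*) [Ring R] : Prop :=
  ∀ r : R, r ≠ 0 → ∃ c ∈ Subring.center R, c * r ≠ 0 ∧ c * r ∈ Subring.center R

/-- A ring is *semiperfect* if `R/J(R)` is semisimple (expressed via a
surjective ring homomorphism with kernel `J(R)` onto a semisimple ring) and
idempotents lift modulo `J(R)`. -/
def IsSemiperfectRing (R : Type*) [Ring R] : Prop :=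
  (∃ (S : Type) (_ : Ring S) (_ : IsSemisimpleRing S) (f : R →+* S),
      Function.Surjective f ∧ RingHom.ker f = Ideal.jacobson (⊥ : Ideal R)) ∧
    ∀ x : R, x * x - x ∈ Ideal.jacobson (⊥ : Ideal R) →
      ∃ e : R, e * e = e ∧ e - x ∈ Ideal.jacobson (⊥ : Ideal R)

/-- `R` is left perfect: it is semiperfect and `J(R)` is left `T`-nilpotent
(for every sequence `x₀, x₁, …` in `J(R)` some product `x₀x₁⋯xₙ₋₁` vanishes). -/
def IsLeftPerfectRing (R : Type*) [Ring R] : Prop :=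
  IsSemiperfectRing R ∧
    ∀ x : ℕ → R, (∀ i, x i ∈ Ideal.jacobson (⊥ : Ideal R)) →
      ∃ n : ℕ, ((List.range n).map x).prod = 0

/-- `R` is right perfect: it is semiperfect and `J(R)` is right `T`-nilpotent
(for every sequence `x₀, x₁, …` in `J(R)` some product `xₙ₋₁⋯x₁x₀` vanishes). -/
def IsRightPerfectRing (R : Type*) [Ring R] : Prop :=
  IsSemiperfectRing R ∧
    ∀ x : ℕ → R, (∀ i, x i ∈ Ideal.jacobson (⊥ : Ideal R)) →
      ∃ n : ℕ, (((List.range n).map x).reverse).prod = 0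

/-- The socle of `R` as a module over its center. -/
def centerSocle (R : Type*) [Ring R] : Submodule (Subring.center R) R :=
  sSup {S : Submodule (Subring.center R) R | IsSimpleModule (Subring.center R) S}

set_option maxHeartbeats 1000000
set_option synthInstance.maxHeartbeats 400000

section AuxUnits
variable {R : Type*} [Ring R]

lemma aux_left_inv_one_add {a : R} (ha : a ∈ Ideal.jacobson (⊥ : Ideal R)) :
    ∃ z : R, z * (1 + a) = 1 := by
  obtain ⟨z, hz⟩ := Ideal.mem_jacobson_iff.1 ha 1
  rw [Ideal.mem_bot, mul_one, sub_eq_zero] at hz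
  exact ⟨z, by rw [mul_add, mul_one, add_comm, hz]⟩

lemma aux_isUnit_one_add {a : R} (ha : a ∈ Ideal.jacobson (⊥ : Ideal R)) :
    IsUnit (1 + a) := by
  obtain ⟨z, hz⟩ := aux_left_inv_one_add ha
  have hzeq : z = 1 + -(z * a) := by
    have : z * 1 + z * a = 1 := by rw [← mul_add]; exact hz
    rw [mul_one] at this
    linear_combination (norm := noncomm_ring) this
  have hmem : -(z * a) ∈ Ideal.jacobson (⊥ : Ideal R) :=
    neg_mem (Ideal.mul_mem_left _ z ha)
  obtain ⟨w, hw⟩ := aux_left_inv_one_add hmem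
  rw [← hzeq] at hw
  -- hw : w * z = 1, hz : z * (1 + a) = 1
  have h1 : (1 + a) * z = 1 := by
    have : w = 1 + a := by
      calc w = w * (z * (1 + a)) := by rw [hz, mul_one]
        _ = (w * z) * (1 + a) := by rw [mul_assoc]
        _ = 1 + a := by rw [hw, one_mul]
    rw [← this, hw]
  exact ⟨⟨1 + a, z, h1, hz⟩, rfl⟩

lemma aux_isUnit_of_sub_mem {x u : R} (hu : IsUnit u)
    (h : x - u ∈ Ideal.jacobson (⊥ : Ideal R)) : IsUnit x := by
  obtain ⟨v, hv⟩ := hu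
  have : x = v * (1 + (v⁻¹ : Rˣ) * (x - u)) := by
    rw [mul_add, mul_one, ← mul_assoc, Units.mul_inv, one_mul, hv]
    abel
  rw [this]
  exact (v.isUnit.mul (aux_isUnit_one_add (Ideal.mul_mem_left _ _ h)))

lemma aux_isUnit_of_image {S : Type*} [Ring S] (f : R →+* S)
    (hker : RingHom.ker f = Ideal.jacobson (⊥ : Ideal R))
    (hsurj : Function.Surjective f) {x : R} (hx : IsUnit (f x)) : IsUnit x := by
  obtain ⟨u, hu⟩ := hx
  obtain ⟨y, hy⟩ := hsurj (↑u⁻¹ : S)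
  have h1 : x * y - 1 ∈ Ideal.jacobson (⊥ : Ideal R) := by
    rw [← hker, RingHom.mem_ker]
    simp [hy, ← hu]
  have h2 : y * x - 1 ∈ Ideal.jacobson (⊥ : Ideal R) := by
    rw [← hker, RingHom.mem_ker]
    simp [hy, ← hu]
  have hxy : IsUnit (x * y) := aux_isUnit_of_sub_mem isUnit_one (by simpa using h1)
  have hyx : IsUnit (y * x) := aux_isUnit_of_sub_mem isUnit_one (by simpa using h2)
  obtain ⟨v, hv⟩ := hxy
  obtain ⟨w, hw⟩ := hyx
  -- x * (y * v⁻¹) = 1 and (w⁻¹ * y) * x = 1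
  have hr : x * (y * (v⁻¹ : Rˣ)) = 1 := by
    rw [← mul_assoc, ← hv]; exact v.mul_inv
  have hl : ((w⁻¹ : Rˣ) * y) * x = 1 := by
    rw [mul_assoc, ← hw]; exact w.inv_mul
  have heq : (y * (v⁻¹ : Rˣ) : R) = ((w⁻¹ : Rˣ) * y : R) := by
    calc (y * (v⁻¹ : Rˣ) : R) = (((w⁻¹ : Rˣ) * y) * x) * (y * (v⁻¹ : Rˣ)) := by rw [hl, one_mul]
      _ = ((w⁻¹ : Rˣ) * y) * (x * (y * (v⁻¹ : Rˣ))) := by noncomm_ring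
      _ = ((w⁻¹ : Rˣ) * y : R) := by rw [hr, mul_one]
  exact ⟨⟨x, y * (v⁻¹ : Rˣ), hr, by rw [heq, hl]⟩, rfl⟩

lemma aux_central_list_prod_reverse (l : List R) (h : ∀ a ∈ l, a ∈ Subring.center R) :
    l.reverse.prod = l.prod := by
  induction l with
  | nil => rfl
  | cons a l ih =>
    rw [List.reverse_cons, List.prod_append, List.prod_cons, List.prod_cons, List.prod_nil, mul_one,
      ih fun b hb => h b (List.mem_cons_of_mem a hb)]
    exact ((Subring.mem_center_iff.1 (h a List.mem_cons_self)) l.prod)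

end AuxUnits

section BwdAux
variable {R : Type*} [Ring R]

lemma aux_vnr {S : Type*} [Ring S] [IsSemisimpleRing S] (a : S) : ∃ x : S, a * x * a = a := by
  obtain ⟨K, hK⟩ := exists_isCompl (Submodule.span S {a} : Submodule S S)
  have h1 : (1 : S) ∈ (Submodule.span S {a} : Submodule S S) ⊔ K := by
    rw [hK.sup_eq_top]; trivial
  obtain ⟨e, he, k, hk, hek⟩ := Submodule.mem_sup.1 h1
  obtain ⟨c, hc⟩ := Submodule.mem_span_singleton.1 he
  refine ⟨c, ?_⟩
  have hak : a * k ∈ K := by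
    have := K.smul_mem a hk
    rwa [smul_eq_mul] at this
  have hae : a * e ∈ (Submodule.span S {a} : Submodule S S) := by
    rw [← hc, smul_eq_mul, ← mul_assoc]
    have := Submodule.smul_mem (Submodule.span S {a}) (a * c) (Submodule.mem_span_singleton_self a)
    rwa [smul_eq_mul] at this
  have hak' : a * k ∈ (Submodule.span S {a} : Submodule S S) := by
    have h2 : a * k = a - a * e := by
      have h3 : a = a * (e + k) := by rw [hek, mul_one]
      rw [mul_add] at h3
      linear_combination (norm := noncomm_ring) -h3
    rw [h2]
    exact sub_mem (Submodule.mem_span_singleton_self a) hae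
  have hak0 : a * k = 0 := by
    have := hK.disjoint.le_bot (Submodule.mem_inf.2 ⟨hak', hak⟩)
    simpa using this
  have hfin : a = a * e := by
    have h3 : a = a * (e + k) := by rw [hek, mul_one]
    rw [mul_add, hak0, add_zero] at h3
    exact h3
  rw [← hc, smul_eq_mul, ← mul_assoc] at hfin
  exact hfin.symm

lemma aux_isUnit_spe {S : Type*} [Ring S] {s y : S} (hc : s * y = y * s)
    (hy1 : s * y * s = s) : IsUnit (s + 1 - s * y) := by
  have E1 : s * (s * y) = s := by rw [hc, ← mul_assoc, hy1]
  have E2 : (s * y) * (s * y) = s * y := by rw [← mul_assoc, hy1]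
  have E3 : s * (s * y * y) = s * y := by
    rw [show s * (s * y * y) = (s * (s * y)) * y by noncomm_ring, E1]
  have E4 : (s * y) * (s * y * y) = s * y * y := by
    rw [show (s * y) * (s * y * y) = ((s * y) * (s * y)) * y by noncomm_ring, E2]
  have E5 : (s * y * y) * s = s * y := by
    rw [show (s * y * y) * s = (s * y) * (y * s) by noncomm_ring, ← hc, E2]
  have E6 : (s * y * y) * (s * y) = s * y * y := by
    rw [show (s * y * y) * (s * y) = ((s * y * y) * s) * y by noncomm_ring, E5]
  have huw : (s + 1 - s * y) * (s * y * y + 1 - s * y) = 1 := by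
    linear_combination (norm := noncomm_ring) E3 - E1 - E4 + E2
  have hwu : (s * y * y + 1 - s * y) * (s + 1 - s * y) = 1 := by
    linear_combination (norm := noncomm_ring) E5 - E6 - hy1 + E2
  exact ⟨⟨_, _, huw, hwu⟩, rfl⟩

lemma aux_isUnit_central {u : Subring.center R} (h : IsUnit (u : R)) : IsUnit u := by
  obtain ⟨v, hv⟩ := h
  have huc : ∀ g : R, g * (u : R) = (u : R) * g := fun g => Subring.mem_center_iff.1 u.2 g
  have h1 : (u : R) * (v⁻¹ : Rˣ) = 1 := by rw [← hv]; exact v.mul_inv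
  have h2 : ((v⁻¹ : Rˣ) : R) * (u : R) = 1 := by rw [← hv]; exact v.inv_mul
  have hwc : ((v⁻¹ : Rˣ) : R) ∈ Subring.center R := by
    rw [Subring.mem_center_iff]
    intro g
    calc g * (v⁻¹ : Rˣ) = ((v⁻¹ : Rˣ) * (u : R)) * (g * (v⁻¹ : Rˣ)) := by rw [h2, one_mul]
      _ = (v⁻¹ : Rˣ) * ((u : R) * g) * (v⁻¹ : Rˣ) := by noncomm_ring
      _ = (v⁻¹ : Rˣ) * (g * (u : R)) * (v⁻¹ : Rˣ) := by rw [huc g]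
      _ = ((v⁻¹ : Rˣ) * g) * ((u : R) * (v⁻¹ : Rˣ)) := by noncomm_ring
      _ = (v⁻¹ : Rˣ) * g := by rw [h1, mul_one]
  exact ⟨⟨u, ⟨(v⁻¹ : Rˣ), hwc⟩, Subtype.ext h1, Subtype.ext h2⟩, rfl⟩

lemma aux_exists_ann
    (hT : ∀ x : ℕ → R, (∀ i, x i ∈ Ideal.jacobson (⊥ : Ideal R) ∧ x i ∈ Subring.center R) →
      ∃ n, ((List.range n).map x).prod = 0)
    {r : R} (hr : r ≠ 0) :
    ∃ c₀ ∈ Subring.center R, c₀ * r ≠ 0 ∧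
      ∀ z ∈ Subring.center R, z ∈ Ideal.jacobson (⊥ : Ideal R) → z * (c₀ * r) = 0 := by
  by_contra hcon
  push_neg at hcon
  have step : ∀ d : {d : R // d ∈ Subring.center R ∧ d * r ≠ 0},
      ∃ z : R, z ∈ Subring.center R ∧ z ∈ Ideal.jacobson (⊥ : Ideal R) ∧ z * (d.1 * r) ≠ 0 := by
    intro d
    obtain ⟨z, hz1, hz2, hz3⟩ := hcon d.1 d.2.1 d.2.2
    exact ⟨z, hz1, hz2, hz3⟩
  choose zf hz1 hz2 hz3 using step
  let next : {d : R // d ∈ Subring.center R ∧ d * r ≠ 0} →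
      {d : R // d ∈ Subring.center R ∧ d * r ≠ 0} := fun d =>
    ⟨d.1 * zf d, mul_mem d.2.1 (hz1 d), by
      have h4 : (d.1 * zf d) * r = zf d * (d.1 * r) := by
        rw [← mul_assoc, Subring.mem_center_iff.1 (hz1 d) d.1]
      rw [h4]
      exact hz3 d⟩
  let g : ℕ → {d : R // d ∈ Subring.center R ∧ d * r ≠ 0} := fun n =>
    Nat.rec ⟨1, Subring.one_mem _, by simpa using hr⟩ (fun _ d => next d) n
  have hg : ∀ n, g (n + 1) = next (g n) := fun n => rfl
  set x : ℕ → R := fun n => zf (g n) with hx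
  have hprod : ∀ n, (g n).1 = ((List.range n).map x).prod := by
    intro n
    induction n with
    | zero => simp [g]
    | succ n ih =>
      rw [hg n]
      show (g n).1 * zf (g n) = _
      rw [List.range_succ, List.map_append, List.prod_append, ih]
      simp [hx]
  obtain ⟨n, hn⟩ := hT x (fun i => ⟨hz2 (g i), hz1 (g i)⟩)
  have := (g n).2.2
  rw [hprod n, hn, zero_mul] at this
  exact this rfl

end BwdAux

lemma aux_ss_of_unit_idem {Q S : Type*} [CommRing Q] [Ring S] [IsSemisimpleRing S]
    (φ : Q →+* S) (hinj : Function.Injective φ)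
    (hK1 : ∀ a : Q, ∃ e u : Q, e * e = e ∧ IsUnit u ∧ a = u * e) :
    IsSemisimpleRing Q := by
  have hCL : ∀ A : Ideal Q, ∃ e : Q, e * e = e ∧ A = Ideal.span {e} := by
    intro A
    have hNoeth : IsNoetherian S S := inferInstance
    set 𝒥 : Set (Submodule S S) :=
      {T | ∃ e : Q, e * e = e ∧ e ∈ A ∧ T = Ideal.span {φ e}} with h𝒥
    have hne : 𝒥.Nonempty := ⟨Ideal.span {φ 0}, 0, by ring, A.zero_mem, rfl⟩
    obtain ⟨T₀, hT₀mem, hT₀max⟩ := set_has_maximal_iff_noetherian.mpr hNoeth 𝒥 hne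
    obtain ⟨e₀, he₀i, he₀A, hT₀⟩ := hT₀mem
    refine ⟨e₀, he₀i, le_antisymm ?_ ?_⟩
    · intro a ha
      obtain ⟨eb, ub, hebi, hubu, rfl⟩ := hK1 a
      have hfA : eb ∈ A := by
        obtain ⟨v, hv⟩ := hubu
        have h6 : eb = ((v⁻¹ : Qˣ) : Q) * (ub * eb) := by
          rw [← mul_assoc, ← hv, v.inv_mul, one_mul]
        rw [h6]
        exact A.mul_mem_left _ ha
      set g : Q := e₀ + eb - e₀ * eb with hg
      have hgi : g * g = g := by
        rw [hg]; linear_combination (1 - eb) * he₀i + (e₀ - 1)^2 * hebi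
      have hgA : g ∈ A := sub_mem (add_mem he₀A hfA) (A.mul_mem_left e₀ hfA)
      have he₀g : e₀ * g = e₀ := by
        rw [hg]; linear_combination (1 - eb) * he₀i
      have hspan_le : Ideal.span {φ e₀} ≤ Ideal.span {φ g} := by
        rw [Ideal.span_le, Set.singleton_subset_iff]
        rw [show φ e₀ = φ e₀ * φ g by rw [← map_mul, he₀g]]
        exact Ideal.mem_span_singleton'.2 ⟨φ e₀, rfl⟩
      have hgJ : Ideal.span {φ g} ∈ 𝒥 := ⟨g, hgi, hgA, rfl⟩
      have heq : Ideal.span {φ e₀} = Ideal.span {φ g} := by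
        rw [hT₀] at hT₀max
        exact eq_of_le_of_not_lt hspan_le (hT₀max _ hgJ)
      have hge₀ : g = e₀ := by
        apply hinj
        have hmem : φ g ∈ Ideal.span {φ e₀} := by
          rw [heq]; exact Ideal.subset_span rfl
        obtain ⟨w, hw⟩ := Ideal.mem_span_singleton'.1 hmem
        calc φ g = w * φ e₀ := hw.symm
          _ = w * (φ e₀ * φ e₀) := by rw [← map_mul, he₀i]
          _ = (w * φ e₀) * φ e₀ := by rw [mul_assoc]
          _ = φ g * φ e₀ := by rw [hw]
          _ = φ (g * e₀) := (map_mul φ g e₀).symm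
          _ = φ (e₀ * g) := by rw [mul_comm]
          _ = φ e₀ := by rw [he₀g]
      have h9 : eb * e₀ = eb := by
        rw [← hge₀, hg]; linear_combination (1 - e₀) * hebi
      exact Ideal.mem_span_singleton'.2 ⟨ub * eb, by rw [mul_assoc, h9]⟩
    · rw [Ideal.span_le, Set.singleton_subset_iff]; exact he₀A
  apply (isSemisimpleModule_iff Q Q).mpr; constructor
  intro A
  obtain ⟨e, hei, rfl⟩ := hCL A
  refine ⟨Ideal.span {1 - e}, ?_, ?_⟩
  · rw [disjoint_iff_inf_le]
    intro x hx
    obtain ⟨hx1, hx2⟩ := Submodule.mem_inf.1 hx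
    obtain ⟨a, ha⟩ := Ideal.mem_span_singleton'.1 hx1
    obtain ⟨b, hb⟩ := Ideal.mem_span_singleton'.1 hx2
    have hxe : x * e = x := by
      rw [← ha, mul_assoc, hei]
    have hxe0 : x * e = 0 := by
      rw [← hb]; linear_combination (-b) * hei
    rw [Submodule.mem_bot, ← hxe, hxe0]
  · rw [codisjoint_iff, eq_top_iff]
    intro x _
    have h1 : (1 : Q) ∈ Ideal.span {e} ⊔ Ideal.span {1 - e} := by
      have heq1 : e + (1 - e) = (1 : Q) := by ring
      have h2 : e + (1 - e) ∈ Ideal.span {e} ⊔ Ideal.span {1 - e} :=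
        add_mem (Submodule.mem_sup_left (Ideal.subset_span rfl))
          (Submodule.mem_sup_right (Ideal.subset_span rfl))
      rwa [heq1] at h2
    have := Submodule.smul_mem _ x h1
    rwa [smul_eq_mul, mul_one] at this

/-- The center of `R`, as a submodule of `R` over the center. -/
def centerSubmodule (R : Type*) [Ring R] : Submodule (Subring.center R) R where
  carrier := Subring.center R
  add_mem' := fun ha hb => add_mem ha hb
  zero_mem' := zero_mem _
  smul_mem' := fun c x hx => by
    rw [Subring.smul_def, smul_eq_mul]
    exact mul_mem c.2 hx

section Fwd
variable {R : Type*} [Ring R]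


lemma aux_corner_zero (h : IsCentrallyEssential R) {e : R} (he : e * e = e) (r : R) :
    e * r * (1 - e) = 0 := by
  by_contra ha
  obtain ⟨c, hc, hne, hcen⟩ := h _ ha
  set z := c * (e * r * (1 - e)) with hz
  have hze : z * e = 0 := by
    have h2 : (e * r * (1 - e)) * e = 0 := by
      have h3 : (1 - e) * e = 0 := by
        rw [sub_mul, one_mul, he, sub_self]
      rw [mul_assoc, h3, mul_zero]
    rw [hz, mul_assoc, h2, mul_zero]
  have hec : e * c = c * e := Subring.mem_center_iff.1 hc e
  have hez : e * z = z := by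
    rw [hz, ← mul_assoc, hec, mul_assoc]
    congr 1
    rw [← mul_assoc, ← mul_assoc, he]
  have hcomm : e * z = z * e := Subring.mem_center_iff.1 hcen e
  exact hne (by rw [← hez, hcomm, hze])

lemma aux_idem_central (h : IsCentrallyEssential R) {e : R} (he : e * e = e) :
    e ∈ Subring.center R := by
  have h1 : ∀ r : R, e * r * (1 - e) = 0 := aux_corner_zero h he
  have he' : (1 - e) * (1 - e) = 1 - e := by noncomm_ring [he]
  have h2 : ∀ r : R, (1 - e) * r * (1 - (1 - e)) = 0 := aux_corner_zero h he'
  rw [Subring.mem_center_iff]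
  intro r
  have e1 : e * r = e * r * e := by
    have := h1 r; linear_combination (norm := noncomm_ring) this
  have e2 : r * e = e * r * e := by
    have := h2 r; linear_combination (norm := noncomm_ring) this
  rw [e2]; exact e1.symm

lemma aux_socle_central (h : IsCentrallyEssential R) :
    ∀ x ∈ centerSocle R, x ∈ Subring.center R := by
  intro x hx
  have hle : centerSocle R ≤ centerSubmodule R := by
    apply sSup_le
    intro S hS
    have hatom : IsAtom S := isSimpleModule_iff_isAtom.1 hS
    obtain ⟨y, hyS, hy0⟩ := Submodule.ne_bot_iff S |>.1 hatom.1
    obtain ⟨c, hc, hne, hcen⟩ := h y hy0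
    have hcyS : c * y ∈ S := by
      have := S.smul_mem (⟨c, hc⟩ : Subring.center R) hyS
      rwa [Subring.smul_def, smul_eq_mul] at this
    have hne_bot : S ⊓ centerSubmodule R ≠ ⊥ := by
      intro hb
      have : c * y ∈ (⊥ : Submodule (Subring.center R) R) := hb ▸
        (Submodule.mem_inf.2 ⟨hcyS, hcen⟩)
      exact hne (Submodule.mem_bot _ |>.1 this)
    have : S ⊓ centerSubmodule R = S := by
      rcases eq_or_ne (S ⊓ centerSubmodule R) S with h' | h'
      · exact h'
      · exact absurd (hatom.2 _ (lt_of_le_of_ne inf_le_left h')) hne_bot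
    exact inf_eq_left.1 this
  exact hle hx

end Fwd


section BwdMain
variable {R : Type*} [Ring R]

theorem aux_bwd
    (hlift : ∀ x : R, x * x - x ∈ Ideal.jacobson (⊥ : Ideal R) →
      ∃ e : R, e * e = e ∧ e - x ∈ Ideal.jacobson (⊥ : Ideal R))
    {S : Type} [Ring S] [IsSemisimpleRing S] (f : R →+* S)
    (hfsurj : Function.Surjective f)
    (hfker : RingHom.ker f = Ideal.jacobson (⊥ : Ideal R))
    (hT : ∀ x : ℕ → R, (∀ i, x i ∈ Ideal.jacobson (⊥ : Ideal R) ∧ x i ∈ Subring.center R) →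
      ∃ n, ((List.range n).map x).prod = 0)
    (hsoc : ∀ x ∈ centerSocle R, x ∈ Subring.center R)
    (hcent : ∀ e : R, e * e = e → e ∈ Subring.center R) :
    ∀ r : R, r ≠ 0 → ∃ c ∈ Subring.center R, c * r ≠ 0 ∧ c * r ∈ Subring.center R := by
  classical
  set J : Ideal R := Ideal.jacobson (⊥ : Ideal R) with hJdef
  set I : Ideal (Subring.center R) := J.comap (Subring.center R).subtype with hIdef
  have hmemI : ∀ c : Subring.center R, c ∈ I ↔ (c : R) ∈ J := fun c => Iff.rfl
  set π : Subring.center R →+* (Subring.center R ⧸ I) := Ideal.Quotient.mk I with hπdef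
  have hπs : Function.Surjective π := Ideal.Quotient.mk_surjective
  have hφ0 : ∀ c ∈ I, (f.comp (Subring.center R).subtype) c = 0 := by
    intro c hc
    have h1 : (c : R) ∈ RingHom.ker f := by rw [hfker]; exact hc
    simpa using h1
  set φ' : (Subring.center R ⧸ I) →+* S :=
    Ideal.Quotient.lift I (f.comp (Subring.center R).subtype) hφ0 with hφ'def
  have hφ'π : ∀ c : Subring.center R, φ' (π c) = f (c : R) := by
    intro c
    rw [hφ'def, hπdef, Ideal.Quotient.lift_mk]
    rfl
  have hφ'inj : Function.Injective φ' := by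
    intro a b hab
    obtain ⟨c, rfl⟩ := hπs a
    obtain ⟨c', rfl⟩ := hπs b
    rw [hφ'π, hφ'π] at hab
    rw [hπdef, Ideal.Quotient.eq]
    rw [hmemI, ← hfker, RingHom.mem_ker]
    have hcoe : ((c - c' : Subring.center R) : R) = (c : R) - (c' : R) := by push_cast; ring
    rw [hcoe, map_sub, hab, sub_self]
  have hcentS : ∀ c : Subring.center R, ∀ t : S, t * f (c : R) = f (c : R) * t := by
    intro c t
    obtain ⟨g, rfl⟩ := hfsurj t
    rw [← map_mul, ← map_mul, Subring.mem_center_iff.1 c.2 g]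
  -- Step K1 : every element of the quotient is a unit times an idempotent
  have hK1 : ∀ a : Subring.center R ⧸ I,
      ∃ e u : Subring.center R ⧸ I, e * e = e ∧ IsUnit u ∧ a = u * e := by
    intro a
    obtain ⟨p, rfl⟩ := hπs a
    set s : S := f (p : R) with hs
    obtain ⟨x, hx⟩ := aux_vnr s
    have hcxs : s * x = x * s := (hcentS p x).symm
    obtain ⟨rε, hrε⟩ := hfsurj (s * x)
    have hrεJ : rε * rε - rε ∈ J := by
      rw [← hfker, RingHom.mem_ker, map_sub, map_mul, hrε]
      rw [show s * x * (s * x) = s * x * s * x by noncomm_ring, hx]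
      exact sub_self _
    obtain ⟨ε, hε2, hεr⟩ := hlift rε hrεJ
    have hεc : ε ∈ Subring.center R := hcent ε hε2
    have hfε : f ε = s * x := by
      have h5 : f (ε - rε) = 0 := by
        rw [← RingHom.mem_ker, hfker]; exact hεr
      rw [map_sub, sub_eq_zero] at h5
      rw [h5, hrε]
    have hee : (⟨ε, hεc⟩ : Subring.center R) * ⟨ε, hεc⟩ = ⟨ε, hεc⟩ := Subtype.ext hε2
    set u : Subring.center R := p + 1 - ⟨ε, hεc⟩ with hu
    have h6 : ((u : Subring.center R) : R) = (p : R) + 1 - ε := rfl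
    have hfu : f ((p : R) + 1 - ε) = s + 1 - s * x := by
      rw [map_sub, map_add, map_one, hfε, hs]
    have hunitS : IsUnit (f (u : R)) := by
      rw [h6, hfu]
      exact aux_isUnit_spe hcxs hx
    have hunitC : IsUnit u := aux_isUnit_central (aux_isUnit_of_image f hfker hfsurj hunitS)
    refine ⟨π ⟨ε, hεc⟩, π u, ?_, hunitC.map π, ?_⟩
    · rw [← map_mul, hee]
    · rw [← map_mul, hπdef, Ideal.Quotient.eq]
      rw [hmemI, ← hfker, RingHom.mem_ker]
      have hcoe : ((p - u * ⟨ε, hεc⟩ : Subring.center R) : R) = (p : R) - ((p : R) + 1 - ε) * ε :=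
        rfl
      rw [hcoe, map_sub, map_mul, hfε, hfu]
      
      have hsse : s * (s * x) = s := by
        rw [hcxs, ← mul_assoc, hx]
      have hxidem : (s * x) * (s * x) = s * x := by
        rw [show s * x * (s * x) = s * x * s * x by noncomm_ring, hx]
      linear_combination (norm := noncomm_ring) - hsse + hxidem
  haveI hssQ : IsSemisimpleRing (Subring.center R ⧸ I) := aux_ss_of_unit_idem φ' hφ'inj hK1
  -- main argument
  intro r hr
  obtain ⟨c₀, hc₀c, hc₀r, hc₀ann⟩ := aux_exists_ann hT hr
  set m : R := c₀ * r with hm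
  -- the annihilator of m in the center
  set A : Ideal (Subring.center R) :=
    LinearMap.ker (LinearMap.toSpanSingleton (Subring.center R) R m) with hAdef
  have hmemA : ∀ c : Subring.center R, c ∈ A ↔ (c : R) * m = 0 := by
    intro c
    rw [hAdef, LinearMap.mem_ker, LinearMap.toSpanSingleton_apply, Subring.smul_def, smul_eq_mul]
  have hIA : I ≤ A := by
    intro c hc
    rw [hmemA]
    exact hc₀ann (c : R) c.2 ((hmemI c).1 hc)
  have hmemB : ∀ c : Subring.center R, π c ∈ A.map π ↔ c ∈ A := by
    intro c
    constructor
    · intro hc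
      obtain ⟨a, haA, ha⟩ := Ideal.mem_map_iff_of_surjective π hπs |>.1 hc
      have h7 : a - c ∈ I := by rwa [← Ideal.Quotient.eq, ← hπdef]
      have h8 : a - c ∈ A := hIA h7
      have : c = a - (a - c) := by ring
      rw [this]
      exact sub_mem haA h8
    · intro hc
      exact Ideal.mem_map_of_mem π hc
  have hBtop : A.map π ≠ ⊤ := by
    intro htop
    have h1 : π 1 ∈ A.map π := htop ▸ Submodule.mem_top
    have h2 : (1 : Subring.center R) ∈ A := (hmemB 1).1 h1
    rw [hmemA] at h2
    simp only [OneMemClass.coe_one, one_mul] at h2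
    exact hc₀r h2
  -- find a simple ideal not below the annihilator
  have hsup : sSup {N : Ideal (Subring.center R ⧸ I) |
      IsSimpleModule (Subring.center R ⧸ I) N} = ⊤ :=
    IsSemisimpleModule.sSup_simples_eq_top _ _
  have hexT : ∃ T : Ideal (Subring.center R ⧸ I),
      IsSimpleModule (Subring.center R ⧸ I) T ∧ ¬ T ≤ A.map π := by
    by_contra hall
    push_neg at hall
    apply hBtop
    rw [eq_top_iff, ← hsup]
    exact sSup_le fun N hN => hall N hN
  obtain ⟨T, hTs, hTB⟩ := hexT
  have hatom : IsAtom T := isSimpleModule_iff_isAtom.1 hTs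
  obtain ⟨tb, htbT, htbB⟩ := SetLike.not_le_iff_exists.1 hTB
  have hTint : ∀ y, y ∈ T → y ∈ A.map π → y = 0 := by
    have hlt : T ⊓ A.map π < T := by
      rcases lt_or_eq_of_le (inf_le_left : T ⊓ A.map π ≤ T) with h | h
      · exact h
      · exfalso; exact hTB (by rw [← h]; exact inf_le_right)
    have hbot : T ⊓ A.map π = ⊥ := hatom.2 _ hlt
    intro y hy1 hy2
    have : y ∈ T ⊓ A.map π := Submodule.mem_inf.2 ⟨hy1, hy2⟩
    rw [hbot] at this
    simpa using this
  obtain ⟨t, htπ⟩ := hπs tb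
  have htm : (t : R) * m ≠ 0 := by
    intro h0
    exact htbB (htπ ▸ (hmemB t).2 ((hmemA t).2 h0))
  -- every nonzero multiple of t*m regenerates t*m
  have hgen : ∀ c : Subring.center R, (c : R) * ((t : R) * m) ≠ 0 →
      ∃ d : Subring.center R, (d : R) * ((c : R) * ((t : R) * m)) = (t : R) * m := by
    intro c hc
    have hsb_mem : π c * tb ∈ T := T.mul_mem_left (π c) htbT
    have hsb_ne : π c * tb ≠ 0 := by
      intro h0
      rw [← htπ, ← map_mul] at h0
      have h1 : (c * t : Subring.center R) ∈ I := by
        rwa [← Ideal.Quotient.eq_zero_iff_mem, ← hπdef]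
      have h2 : (c * t : Subring.center R) ∈ A := hIA h1
      rw [hmemA, Subring.coe_mul, mul_assoc] at h2
      exact hc h2
    have hspan : Submodule.span (Subring.center R ⧸ I) {π c * tb} = T := by
      have hle : Submodule.span (Subring.center R ⧸ I) {π c * tb} ≤ T := by
        rw [Submodule.span_le, Set.singleton_subset_iff]; exact hsb_mem
      rcases lt_or_eq_of_le hle with h | h
      · exfalso
        have := hatom.2 _ h
        exact hsb_ne (by
          have := this ▸ Submodule.mem_span_singleton_self (π c * tb)
          simpa using this)
      · exact h
    have htb_mem : tb ∈ Submodule.span (Subring.center R ⧸ I) {π c * tb} := hspan ▸ htbT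
    obtain ⟨db, hdb⟩ := Submodule.mem_span_singleton.1 htb_mem
    obtain ⟨d, rfl⟩ := hπs db
    rw [smul_eq_mul, ← htπ, ← map_mul, ← map_mul] at hdb
    -- hdb : π (d * (c * t)) = π t  →  d*c*t - t ∈ I ⊆ A
    have h3 : (d * (c * t) - t : Subring.center R) ∈ A := by
      apply hIA
      rwa [← Ideal.Quotient.eq, ← hπdef]
    rw [hmemA] at h3
    refine ⟨d, ?_⟩
    have h4 : ((d * (c * t) - t : Subring.center R) : R) =
        (d : R) * ((c : R) * (t : R)) - (t : R) := by push_cast; ring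
    rw [h4, sub_mul] at h3
    have h5 : (d : R) * ((c : R) * (t : R)) * m = (t : R) * m := sub_eq_zero.1 h3
    have h6 : (d : R) * ((c : R) * ((t : R) * m)) = (d : R) * ((c : R) * (t : R)) * m := by
      noncomm_ring
    rw [h6, h5]
  -- span of t*m is a simple submodule over the center
  have hspan_atom : IsAtom (Submodule.span (Subring.center R) {(t : R) * m}) := by
    constructor
    · intro h0
      exact htm (by
        have := h0 ▸ Submodule.mem_span_singleton_self ((t : R) * m)
        simpa using this)
    · intro b hb
      by_contra hbne
      obtain ⟨y, hyb, hy0⟩ := Submodule.ne_bot_iff b |>.1 hbne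
      obtain ⟨cc, hcc⟩ := Submodule.mem_span_singleton.1 (hb.le hyb)
      rw [Subring.smul_def, smul_eq_mul] at hcc
      obtain ⟨d, hd⟩ := hgen cc (by rw [hcc]; exact hy0)
      have htm_b : (t : R) * m ∈ b := by
        rw [← hd, hcc]
        have := b.smul_mem d hyb
        rwa [Subring.smul_def, smul_eq_mul] at this
      have : Submodule.span (Subring.center R) {(t : R) * m} ≤ b := by
        rw [Submodule.span_le, Set.singleton_subset_iff]; exact htm_b
      exact (lt_irrefl b) (lt_of_lt_of_le hb this)
  have hsimple : IsSimpleModule (Subring.center R)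
      (Submodule.span (Subring.center R) {(t : R) * m}) :=
    isSimpleModule_iff_isAtom.2 hspan_atom
  have htm_soc : (t : R) * m ∈ centerSocle R := by
    have hle : Submodule.span (Subring.center R) {(t : R) * m} ≤ centerSocle R :=
      le_sSup hsimple
    exact hle (Submodule.mem_span_singleton_self _)
  have htm_c : (t : R) * m ∈ Subring.center R := hsoc _ htm_soc
  refine ⟨(t : R) * c₀, Subring.mul_mem _ t.2 hc₀c, ?_, ?_⟩
  · rw [mul_assoc, ← hm]; exact htm
  · rw [mul_assoc, ← hm]; exact htm_c

end BwdMain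

/-- A right or left perfect ring is centrally essential iff `Soc(R_C) ⊆ C` and
all idempotents of `R` are central. -/
theorem centrallyEssential_iff_of_perfect (R : Type*) [Ring R]
    (hperf : IsLeftPerfectRing R ∨ IsRightPerfectRing R) :
    IsCentrallyEssential R ↔
      ((∀ x ∈ centerSocle R, x ∈ Subring.center R) ∧
        ∀ e : R, e * e = e → e ∈ Subring.center R) := by
  constructor
  · intro h
    exact ⟨aux_socle_central h, fun e he => aux_idem_central h he⟩
  · rintro ⟨hsoc, hcent⟩
    have hsp : IsSemiperfectRing R := hperf.elim (·.1) (·.1)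
    obtain ⟨⟨S, hRing, hSS, f, hfsurj, hfker⟩, hlift⟩ := hsp
    have hT : ∀ x : ℕ → R, (∀ i, x i ∈ Ideal.jacobson (⊥ : Ideal R) ∧ x i ∈ Subring.center R) →
        ∃ n, ((List.range n).map x).prod = 0 := by
      intro x hx
      rcases hperf with h | h
      · exact h.2 x (fun i => (hx i).1)
      · obtain ⟨n, hn⟩ := h.2 x (fun i => (hx i).1)
        refine ⟨n, ?_⟩
        rw [← aux_central_list_prod_reverse _ ?_, hn]
        intro a ha
        obtain ⟨i, _, rfl⟩ := List.mem_map.1 ha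
        exact (hx i).2
    exact aux_bwd hlift f hfsurj hfker hT hsoc hcent
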